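/- arXiv:2302.04292 — 2 statements merged into one kernel-verified Lean document; each statement's English description precedes it below -/
import Mathlib

section
/- Let L ≥ 0, b, d ∈ ℕ, and let f_1,…,f_d be L-Lipschitz continuous pdfs on ℝ each supported on [0,1]. Then there exist histograms h_1,…,h_d ∈ ℋ_{1,b} such that ‖ ∏_{i=1}^d f_i − ∏_{i=1}^d h_i ‖_1 ≤ dL/(√12 · b), where ∏ denotes the product function on ℝ^d and ‖·‖_1 is the L¹ norm with respect to Lebesgue measure; equivalently, min_{h ∈ ℋ^1_{d,b}} ‖ ∏_{i=1}^d f_i − h ‖_1 ≤ dL/(√12 · b). -/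
open MeasureTheory Filter Finset

noncomputable section

/-- Membership in `ℋ_{1,b}`: a pdf on `[0,1]` that is constant on each of the
`b` equal-width bins `[(i-1)/b, i/b)`, i.e. a non-negative step function with respect
to this partition integrating to one. -/
def IsHist1 (b : ℕ) (h : ℝ → ℝ) : Prop :=
  ∃ c : Fin b → ℝ, (∀ i, 0 ≤ c i) ∧
    (∀ x, h x = ∑ i : Fin b,
      c i * Set.indicator (Set.Ico ((i.val : ℝ) / b) (((i.val : ℝ) + 1) / b)) 1 x) ∧
    ∫ x, h x = 1


/-- Telescoping bound for difference of products of nonnegative reals. -/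
lemma telescope_prod : ∀ (n : ℕ) (a b : Fin n → ℝ), (∀ i, 0 ≤ a i) → (∀ i, 0 ≤ b i) →
    |∏ i, a i - ∏ i, b i| ≤
      ∑ k : Fin n, ∏ i : Fin n,
        (if i < k then b i else if i = k then |a i - b i| else a i) := by
  intro n
  induction n with
  | zero => intro a b _ _; simp
  | succ n ih =>
    intro a b ha hb
    set a' : Fin n → ℝ := fun i => a i.succ with ha'
    set b' : Fin n → ℝ := fun i => b i.succ with hb'
    have hP : (0:ℝ) ≤ ∏ i, a' i := Finset.prod_nonneg fun i _ => ha i.succ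
    have key : |∏ i, a i - ∏ i, b i| ≤
        |a 0 - b 0| * ∏ i, a' i + b 0 * |∏ i, a' i - ∏ i, b' i| := by
      rw [Fin.prod_univ_succ a, Fin.prod_univ_succ b]
      have : a 0 * ∏ i, a' i - b 0 * ∏ i, b' i
          = (a 0 - b 0) * ∏ i, a' i + b 0 * (∏ i, a' i - ∏ i, b' i) := by ring
      rw [this]
      calc |(a 0 - b 0) * ∏ i, a' i + b 0 * (∏ i, a' i - ∏ i, b' i)|
          ≤ |(a 0 - b 0) * ∏ i, a' i| + |b 0 * (∏ i, a' i - ∏ i, b' i)| := abs_add_le _ _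
        _ = |a 0 - b 0| * ∏ i, a' i + b 0 * |∏ i, a' i - ∏ i, b' i| := by
            rw [abs_mul, abs_mul, abs_of_nonneg hP, abs_of_nonneg (hb 0)]
    have ih' := ih a' b' (fun i => ha i.succ) (fun i => hb i.succ)
    have key2 : |∏ i, a i - ∏ i, b i| ≤
        |a 0 - b 0| * ∏ i, a' i + b 0 * ∑ k : Fin n, ∏ i : Fin n,
          (if i < k then b' i else if i = k then |a' i - b' i| else a' i) := by
      refine key.trans (add_le_add le_rfl (mul_le_mul_of_nonneg_left ih' (hb 0)))
    refine key2.trans (le_of_eq ?_)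
    rw [Fin.sum_univ_succ]
    congr 1
    · -- k = 0 term
      rw [Fin.prod_univ_succ]
      simp [Fin.succ_ne_zero, a']
    · rw [Finset.mul_sum]
      refine Finset.sum_congr rfl fun k _ => ?_
      rw [Fin.prod_univ_succ]
      congr 1
      · simp [Fin.succ_lt_succ_iff, Fin.succ_inj, a', b']

/-- Per-bin L¹ approximation bound for a Lipschitz function by its bin average. -/
lemma bin_L1 {g : ℝ → ℝ} {L : ℝ} (hL : 0 < L)
    (hgl : ∀ x y, |g x - g y| ≤ L * |x - y|) (a w : ℝ) (hw : 0 < w) :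
    ∫ x in Set.Ico a (a + w), |g x - (∫ y in Set.Ico a (a + w), g y) / w|
      ≤ L * w ^ 2 / Real.sqrt 12 := by
  have hgc : Continuous g := by
    have : LipschitzWith (Real.toNNReal L) g := by
      refine LipschitzWith.of_dist_le_mul fun x y => ?_
      rw [Real.dist_eq, Real.dist_eq, Real.coe_toNNReal _ hL.le]
      exact hgl x y
    exact this.continuous
  set s : Set ℝ := Set.Ico a (a + w) with hs
  have hms : MeasurableSet s := measurableSet_Ico
  have hvol : (volume s).toReal = w := by
    rw [hs, Real.volume_Ico]
    rw [ENNReal.toReal_ofReal (by linarith)]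
    ring
  have hfin : volume s < ⊤ := by
    rw [hs, Real.volume_Ico]; exact ENNReal.ofReal_lt_top
  -- integrability on s of continuous functions
  have hintOn : ∀ (F : ℝ → ℝ), Continuous F → IntegrableOn F s := by
    intro F hF
    exact (hF.integrableOn_Icc (a := a) (b := a + w)).mono_set Set.Ico_subset_Icc_self
  have hgs : IntegrableOn g s := hintOn g hgc
  set B := ∫ x in s, g x with hB
  set c := B / w with hc
  set A := ∫ x in s, g x ^ 2 with hA
  have hBc : B = c * w := by rw [hc]; field_simp
  -- moment identity
  have moment : ∀ K : ℝ, ∫ x in s, (g x - K) ^ 2 = A - 2 * K * B + K ^ 2 * w := by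
    intro K
    have e1 : ∫ x in s, (g x - K) ^ 2
        = ∫ x in s, (g x ^ 2 - 2 * K * g x + K ^ 2) := by
      refine integral_congr_ae (ae_of_all _ fun x => by ring)
    have i1 : IntegrableOn (fun x => g x ^ 2 - 2 * K * g x) s :=
      hintOn _ ((hgc.pow 2).sub (continuous_const.mul hgc))
    have i2 : IntegrableOn (fun _ : ℝ => K ^ 2) s := integrableOn_const hfin.ne
    have i3 : IntegrableOn (fun x => g x ^ 2) s := hintOn _ (hgc.pow 2)
    have i4 : IntegrableOn (fun x => 2 * K * g x) s := hintOn _ (continuous_const.mul hgc)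
    rw [e1, integral_add i1 i2, integral_sub i3 i4,
      integral_const_mul, setIntegral_const, measureReal_def, hvol]
    simp only [smul_eq_mul]
    rw [← hA, ← hB]; ring
  set m := a + w / 2 with hm
  have hVle : ∫ x in s, (g x - c) ^ 2 ≤ ∫ x in s, (g x - g m) ^ 2 := by
    rw [moment c, moment (g m)]
    rw [hBc]
    nlinarith [mul_nonneg hw.le (sq_nonneg (g m - c))]
  have hV2 : ∫ x in s, (g x - g m) ^ 2 ≤ L ^ 2 * w ^ 3 / 12 := by
    have step : ∫ x in s, (g x - g m) ^ 2 ≤ ∫ x in s, L ^ 2 * (x - m) ^ 2 := by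
      refine setIntegral_mono_on (hintOn _ ((hgc.sub continuous_const).pow 2))
        (hintOn _ (continuous_const.mul ((continuous_id.sub continuous_const).pow 2))) hms
        fun x _ => ?_
      have h1 := hgl x m
      have h2 : |g x - g m| ^ 2 ≤ (L * |x - m|) ^ 2 := by
        exact pow_le_pow_left₀ (abs_nonneg _) h1 2
      calc (g x - g m) ^ 2 = |g x - g m| ^ 2 := (sq_abs _).symm
        _ ≤ (L * |x - m|) ^ 2 := h2
        _ = L ^ 2 * (x - m) ^ 2 := by rw [mul_pow, sq_abs]
    refine step.trans (le_of_eq ?_)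
    rw [integral_const_mul]
    have e2 : ∫ x in s, (x - m) ^ 2 = ∫ x in a..(a + w), (x - m) ^ 2 := by
      rw [hs, integral_Ico_eq_integral_Ioo, ← integral_Ioc_eq_integral_Ioo,
        ← intervalIntegral.integral_of_le (by linarith)]
    rw [e2, intervalIntegral.integral_comp_sub_right (fun x => x ^ 2) m]
    have : a - m = -(w / 2) := by rw [hm]; ring
    have h2 : a + w - m = w / 2 := by rw [hm]; ring
    rw [this, h2, integral_pow]
    ring
  -- Cauchy-Schwarz via AM-GM
  set t := L * w / Real.sqrt 12 with ht
  have hsq : Real.sqrt 12 ^ 2 = 12 := Real.sq_sqrt (by norm_num)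
  have hs12 : 0 < Real.sqrt 12 := Real.sqrt_pos.2 (by norm_num)
  have htpos : 0 < t := by positivity
  have hAM : ∫ x in s, |g x - c| ≤ ∫ x in s, ((g x - c) ^ 2 / (2 * t) + t / 2) := by
    refine setIntegral_mono_on (hintOn _ (hgc.sub continuous_const).abs)
      (hintOn _ ((((hgc.sub continuous_const).pow 2).div_const _).add continuous_const)) hms
      fun x _ => ?_
    set u := g x - c with hu
    have h2t : (0:ℝ) < 2*t := by linarith
    have h' : 2*t*|u| ≤ u^2 + t^2 := by nlinarith [sq_nonneg (|u| - t), sq_abs u]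
    calc |u| = (2*t*|u|)/(2*t) := by field_simp
      _ ≤ (u^2 + t^2)/(2*t) := by gcongr
      _ = u^2/(2*t) + t/2 := by field_simp
  have hsplit : ∫ x in s, ((g x - c) ^ 2 / (2 * t) + t / 2)
      = (∫ x in s, (g x - c) ^ 2) / (2 * t) + t / 2 * w := by
    have j1 : IntegrableOn (fun x => (g x - c) ^ 2 / (2 * t)) s :=
      hintOn _ (((hgc.sub continuous_const).pow 2).div_const _)
    have j2 : IntegrableOn (fun _ : ℝ => t / 2) s := integrableOn_const hfin.ne
    rw [integral_add j1 j2, integral_div, setIntegral_const, measureReal_def, hvol]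
    simp only [smul_eq_mul]; ring
  have hVbound : ∫ x in s, (g x - c) ^ 2 ≤ L ^ 2 * w ^ 3 / 12 := hVle.trans hV2
  have final : (L ^ 2 * w ^ 3 / 12) / (2 * t) + t / 2 * w = L * w ^ 2 / Real.sqrt 12 := by
    rw [ht]
    field_simp
    ring_nf
    linear_combination hsq
  calc ∫ x in s, |g x - c| ≤ (∫ x in s, (g x - c) ^ 2) / (2 * t) + t / 2 * w := by
        rw [← hsplit]; exact hAM
    _ ≤ (L ^ 2 * w ^ 3 / 12) / (2 * t) + t / 2 * w := by
        gcongr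
    _ = L * w ^ 2 / Real.sqrt 12 := final

lemma sum_bins {b : ℕ} {F : ℝ → ℝ} (hb : 1 ≤ b) (hF : Integrable F) :
    ∀ n : ℕ, ∑ k ∈ Finset.range n, ∫ x in Set.Ico ((k:ℝ)/b) (((k:ℝ)+1)/b), F x
      = ∫ x in Set.Ico (0:ℝ) ((n:ℝ)/b), F x := by
  have hb0 : (0:ℝ) < b := by exact_mod_cast hb
  intro n
  induction n with
  | zero => simp
  | succ n ih =>
    rw [Finset.sum_range_succ, ih]
    push_cast
    have h1 : (0:ℝ) ≤ (n:ℝ)/b := by positivity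
    have h2 : (n:ℝ)/b ≤ ((n:ℝ)+1)/b := by gcongr; linarith
    rw [← Set.Ico_union_Ico_eq_Ico h1 h2,
      setIntegral_union (Set.Ico_disjoint_Ico_same) measurableSet_Ico
        hF.integrableOn hF.integrableOn]

lemma hist_approx {b : ℕ} (hb : 1 ≤ b) {L : ℝ} (hL : 0 < L) {g : ℝ → ℝ}
    (hg0 : ∀ x, 0 ≤ g x) (hgone : ∫ x, g x = 1)
    (hgsupp : ∀ x, x ∉ Set.Icc (0:ℝ) 1 → g x = 0)
    (hgl : ∀ x y, |g x - g y| ≤ L * |x - y|) :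
    ∃ h : ℝ → ℝ, IsHist1 b h ∧ Integrable h ∧ (∀ x, 0 ≤ h x) ∧
      Integrable g ∧ (∫ x, h x = 1) ∧ ∫ x, |g x - h x| ≤ L / (Real.sqrt 12 * b) := by
  have hb0 : (0:ℝ) < b := by exact_mod_cast hb
  have hbne : (b:ℝ) ≠ 0 := ne_of_gt hb0
  have hgc : Continuous g := by
    have : LipschitzWith (Real.toNNReal L) g := by
      refine LipschitzWith.of_dist_le_mul fun x y => ?_
      rw [Real.dist_eq, Real.dist_eq, Real.coe_toNNReal _ hL.le]
      exact hgl x y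
    exact this.continuous
  have hsupp : HasCompactSupport g := HasCompactSupport.intro isCompact_Icc hgsupp
  have hgint : Integrable g := hgc.integrable_of_hasCompactSupport hsupp
  set bin : Fin b → Set ℝ := fun k => Set.Ico ((k.val:ℝ)/b) (((k.val:ℝ)+1)/b) with hbin
  set c : Fin b → ℝ := fun k => b * ∫ x in bin k, g x with hcdef
  set h : ℝ → ℝ := fun x => ∑ k : Fin b, c k * (bin k).indicator 1 x with hhdef
  have hfin : ∀ k : Fin b, volume (bin k) < ⊤ := fun k => by
    simp only [hbin, Real.volume_Ico]; exact ENNReal.ofReal_lt_top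
  have hind_int : ∀ k : Fin b, Integrable ((bin k).indicator (1 : ℝ → ℝ)) := fun k =>
    (integrable_indicator_iff measurableSet_Ico).2
      (integrableOn_const (C := (1:ℝ)) (hfin k).ne)
  have hint : Integrable h :=
    integrable_finset_sum _ (fun k _ => (hind_int k).const_mul _)
  have hind_val : ∀ k : Fin b, ∫ x, (bin k).indicator (1 : ℝ → ℝ) x = 1/b := by
    intro k
    rw [integral_indicator measurableSet_Ico]
    simp only [Pi.one_apply]
    rw [setIntegral_const, measureReal_def, Real.volume_Ico,
      show ((k.val:ℝ)+1)/b - (k.val:ℝ)/b = 1/b from by ring,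
      ENNReal.toReal_ofReal (by positivity)]
    simp
  have hc0 : ∀ k, 0 ≤ c k := fun k =>
    mul_nonneg hb0.le (setIntegral_nonneg measurableSet_Ico fun x _ => hg0 x)
  have hh0 : ∀ x, 0 ≤ h x := fun x =>
    Finset.sum_nonneg fun k _ =>
      mul_nonneg (hc0 k) (Set.indicator_nonneg (fun _ _ => zero_le_one) x)
  have hsum : ∫ x, h x = ∑ k : Fin b, ∫ x in bin k, g x := by
    rw [integral_finset_sum _ (fun k _ => (hind_int k).const_mul _)]
    refine Finset.sum_congr rfl fun k _ => ?_
    rw [integral_const_mul, hind_val k, hcdef]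
    field_simp
  have hIco01 : ∫ x in Set.Ico (0:ℝ) 1, g x = 1 := by
    rw [← integral_Icc_eq_integral_Ico,
      setIntegral_eq_integral_of_forall_compl_eq_zero hgsupp]
    exact hgone
  have hinth1 : ∫ x, h x = 1 := by
    rw [hsum, Fin.sum_univ_eq_sum_range (fun k => ∫ x in Set.Ico ((k:ℝ)/b) (((k:ℝ)+1)/b), g x),
      sum_bins hb hgint b, div_self hbne, hIco01]
  have hist : IsHist1 b h := ⟨c, hc0, fun x => rfl, hinth1⟩
  -- bins are disjoint
  have hbin_disj : ∀ (j k : Fin b) (x : ℝ), x ∈ bin k → j ≠ k → x ∉ bin j := by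
    intro j k x hx hjk hxj
    have hne : j.val ≠ k.val := fun e => hjk (Fin.ext e)
    rcases hne.lt_or_gt with hlt | hlt
    · have h1 : (j.val:ℝ) + 1 ≤ (k.val:ℝ) := by exact_mod_cast hlt
      have h2 : ((j.val:ℝ)+1)/b ≤ (k.val:ℝ)/b := by gcongr
      have := hxj.2; have := hx.1; linarith
    · have h1 : (k.val:ℝ) + 1 ≤ (j.val:ℝ) := by exact_mod_cast hlt
      have h2 : ((k.val:ℝ)+1)/b ≤ (j.val:ℝ)/b := by gcongr
      have := hx.2; have := hxj.1; linarith
  have hheq : ∀ (k : Fin b) (x : ℝ), x ∈ bin k → h x = c k := by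
    intro k x hx
    show (∑ j : Fin b, c j * (bin j).indicator 1 x) = c k
    rw [Finset.sum_eq_single k]
    · rw [Set.indicator_of_mem hx]; simp
    · intro j _ hjk
      rw [Set.indicator_of_notMem (hbin_disj j k x hx hjk)]; simp
    · intro habs; exact absurd (Finset.mem_univ k) habs
  have hbin_sub : ∀ k : Fin b, bin k ⊆ Set.Icc (0:ℝ) 1 := by
    intro k x hx
    have hk : (k.val:ℝ) + 1 ≤ (b:ℝ) := by exact_mod_cast Nat.succ_le_of_lt k.isLt
    have h1 : (0:ℝ) ≤ (k.val:ℝ)/b := by positivity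
    have h2 : ((k.val:ℝ)+1)/b ≤ 1 := by rw [div_le_one hb0]; exact hk
    exact ⟨le_trans h1 hx.1, le_trans hx.2.le h2⟩
  have hh_out : ∀ x, x ∉ Set.Icc (0:ℝ) 1 → h x = 0 := by
    intro x hx
    show (∑ j : Fin b, c j * (bin j).indicator 1 x) = 0
    refine Finset.sum_eq_zero fun k _ => ?_
    rw [Set.indicator_of_notMem (fun hxk => hx (hbin_sub k hxk)), mul_zero]
  -- the L1 bound
  have habs_int : Integrable (fun x => |g x - h x|) := (hgint.sub hint).abs
  have step1 : ∫ x, |g x - h x| = ∫ x in Set.Ico (0:ℝ) 1, |g x - h x| := by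
    rw [← integral_Icc_eq_integral_Ico,
      setIntegral_eq_integral_of_forall_compl_eq_zero
        (fun x hx => by rw [hgsupp x hx, hh_out x hx]; simp)]
  have step3 : ∫ x in Set.Ico (0:ℝ) 1, |g x - h x|
      = ∑ k ∈ Finset.range b, ∫ x in Set.Ico ((k:ℝ)/b) (((k:ℝ)+1)/b), |g x - h x| := by
    rw [sum_bins hb habs_int b, div_self hbne]
  have step4 : ∀ k ∈ Finset.range b,
      ∫ x in Set.Ico ((k:ℝ)/b) (((k:ℝ)+1)/b), |g x - h x|
        ≤ L * (1/(b:ℝ)) ^ 2 / Real.sqrt 12 := by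
    intro k hk
    rw [Finset.mem_range] at hk
    set K : Fin b := ⟨k, hk⟩ with hK
    have hbinK : bin K = Set.Ico ((k:ℝ)/b) (((k:ℝ)+1)/b) := rfl
    have e1 : ∫ x in Set.Ico ((k:ℝ)/b) (((k:ℝ)+1)/b), |g x - h x|
        = ∫ x in Set.Ico ((k:ℝ)/b) (((k:ℝ)+1)/b), |g x - c K| := by
      refine setIntegral_congr_fun measurableSet_Ico fun x hx => ?_
      rw [hheq K x hx]
    have e2 : Set.Ico ((k:ℝ)/b) (((k:ℝ)+1)/b) = Set.Ico ((k:ℝ)/b) ((k:ℝ)/b + 1/b) := by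
      rw [add_div]
    have e3 : c K = (∫ y in Set.Ico ((k:ℝ)/b) ((k:ℝ)/b + 1/b), g y) / (1/b) := by
      have hrfl : c K = (b:ℝ) * ∫ x in bin K, g x := rfl
      rw [hrfl, hbinK, e2]
      field_simp
    rw [e1, e2, e3]
    have := bin_L1 hL hgl ((k:ℝ)/b) (1/b) (by positivity)
    exact this
  have step5 : ∑ k ∈ Finset.range b, ∫ x in Set.Ico ((k:ℝ)/b) (((k:ℝ)+1)/b), |g x - h x|
      ≤ L / (Real.sqrt 12 * b) := by
    have hcard := Finset.sum_le_card_nsmul (Finset.range b)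
      (fun k => ∫ x in Set.Ico ((k:ℝ)/b) (((k:ℝ)+1)/b), |g x - h x|)
      (L * (1/(b:ℝ)) ^ 2 / Real.sqrt 12) step4
    rw [Finset.card_range, nsmul_eq_mul] at hcard
    refine hcard.trans (le_of_eq ?_)
    have hs12 : (0:ℝ) < Real.sqrt 12 := Real.sqrt_pos.2 (by norm_num)
    field_simp
  exact ⟨h, hist, hint, hh0, hgint, hinth1,
    by rw [step1, step3]; exact step5⟩

/-- **Lemma 9.** Rank-one histogram approximation of a product of `L`-Lipschitz pdfs
supported on `[0,1]`:  `min_{h ∈ ℋ¹_{d,b}} ‖∏ᵢ fᵢ − h‖₁ ≤ dL/(√12 b)`. -/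
theorem rank_one_histogram_approx
    (d b : ℕ) (hd : 1 ≤ d) (hb : 1 ≤ b) (L : ℝ) (hL : 0 ≤ L)
    (f : Fin d → ℝ → ℝ)
    (hf : ∀ i, (∀ x, 0 ≤ f i x) ∧ (∫ x, f i x = 1) ∧
      (∀ x, x ∉ Set.Icc (0 : ℝ) 1 → f i x = 0) ∧
      (∀ x y, |f i x - f i y| ≤ L * |x - y|)) :
    ∃ h : Fin d → ℝ → ℝ, (∀ i, IsHist1 b (h i)) ∧
      ∫ x : Fin d → ℝ, |(∏ i, f i (x i)) - ∏ i, h i (x i)|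
        ≤ d * L / (Real.sqrt 12 * b) := by
  rcases eq_or_lt_of_le hL with hL0 | hLpos
  · -- L = 0 : contradiction with ∫ f = 1
    exfalso
    set i0 : Fin d := ⟨0, hd⟩
    have hzero : ∀ x, f i0 x = 0 := by
      intro x
      have h1 := (hf i0).2.2.2 x 2
      rw [← hL0] at h1
      have h2 : f i0 2 = 0 := (hf i0).2.2.1 2 (by norm_num)
      have h3 : |f i0 x - f i0 2| ≤ 0 := by linarith [h1]
      have := abs_nonpos_iff.1 h3
      rw [h2] at this; linarith [this]
    have := (hf i0).2.1
    rw [show (fun x => f i0 x) = (fun _ : ℝ => (0:ℝ)) from funext hzero] at this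
    simp at this
  · -- L > 0
    choose h H using fun i => hist_approx hb hLpos (hf i).1 (hf i).2.1 (hf i).2.2.1 (hf i).2.2.2
    refine ⟨h, fun i => (H i).1, ?_⟩
    set F : Fin d → Fin d → ℝ → ℝ := fun k i =>
      if i < k then h i else if i = k then (fun y => |f i y - h i y|) else f i with hF
    have hFint : ∀ k i, Integrable (F k i) := by
      intro k i
      simp only [hF]
      split_ifs with h1 h2
      · exact (H i).2.1
      · exact ((H i).2.2.2.1.sub (H i).2.1).abs
      · exact (H i).2.2.2.1
    have hFkk : ∀ k : Fin d, F k k = fun y => |f k y - h k y| := by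
      intro k; simp [hF]
    have hFone : ∀ k i, i ≠ k → ∫ y, F k i y = 1 := by
      intro k i hik
      by_cases h1 : i < k
      · simp only [hF, if_pos h1]; exact (H i).2.2.2.2.1
      · simp only [hF, if_neg h1, if_neg hik]; exact (hf i).2.1
    have hFk : ∀ k : Fin d, ∫ y, F k k y ≤ L / (Real.sqrt 12 * b) := by
      intro k
      rw [hFkk k]
      exact (H k).2.2.2.2.2
    have key : ∀ x : Fin d → ℝ,
        |(∏ i, f i (x i)) - ∏ i, h i (x i)| ≤ ∑ k, ∏ i, F k i (x i) := by
      intro x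
      have t := telescope_prod d (fun i => f i (x i)) (fun i => h i (x i))
        (fun i => (hf i).1 (x i)) (fun i => (H i).2.2.1 (x i))
      refine t.trans (le_of_eq ?_)
      refine Finset.sum_congr rfl fun k _ => Finset.prod_congr rfl fun i _ => ?_
      simp only [hF]
      by_cases h1 : i < k
      · simp [h1]
      · by_cases h2 : i = k <;> simp [h1, h2]
    have intRHS : Integrable (fun x : Fin d → ℝ => ∑ k, ∏ i, F k i (x i)) :=
      integrable_finset_sum _ (fun k _ => Integrable.fintype_prod (fun i => hFint k i))
    calc ∫ x : Fin d → ℝ, |(∏ i, f i (x i)) - ∏ i, h i (x i)|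
        ≤ ∫ x : Fin d → ℝ, ∑ k, ∏ i, F k i (x i) :=
          integral_mono_of_nonneg (ae_of_all _ fun x => abs_nonneg _) intRHS
            (ae_of_all _ key)
      _ = ∑ k, ∏ i, ∫ y, F k i y := by
          rw [integral_finset_sum (μ := (volume : Measure (Fin d → ℝ))) _ (fun k _ =>
            Integrable.fintype_prod (fun i => hFint k i))]
          exact Finset.sum_congr rfl fun k _ =>
            integral_fintype_prod_eq_prod (ι := Fin d) (F k)
      _ = ∑ k : Fin d, ∫ y, F k k y := by
          refine Finset.sum_congr rfl fun k _ => ?_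
          exact Finset.prod_eq_single k (fun i _ hik => hFone k i hik)
            (fun habs => absurd (Finset.mem_univ k) habs)
      _ ≤ ∑ _k : Fin d, L / (Real.sqrt 12 * b) :=
          Finset.sum_le_sum fun k _ => hFk k
      _ = d * L / (Real.sqrt 12 * b) := by
          rw [Finset.sum_const, Finset.card_univ, Fintype.card_fin, nsmul_eq_mul,
            mul_div_assoc]
end
end

section
/- Let W = (W_i)_{i=1}^∞ be a non-negative, non-increasing sequence converging to 0 and L̃ = (L̃_i)_{i=1}^∞ a non-negative, non-decreasing sequence. Let p ∈ 𝒟_d ∩ 𝔙(W, L̃) and let b, k ∈ ℕ. Then there exists h ∈ ℋ^k_{d,b} with ‖p − h‖_1 ≤ d·L̃_k/(√12 · b) + 2 W_k. -/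
open MeasureTheory Filter Finset

noncomputable section

/-- A pdf on `ℝ`: a Lebesgue-measurable, a.e. non-negative function with integral one. -/
def IsPdf1 (f : ℝ → ℝ) : Prop :=
  Measurable f ∧ (∀ᵐ x ∂(volume : Measure ℝ), 0 ≤ f x) ∧ ∫ x, f x = 1

/-- Membership in `𝒟_d`: a pdf on `ℝ^d` supported on the unit cube `[0,1]^d`. -/
def MemD (d : ℕ) (p : (Fin d → ℝ) → ℝ) : Prop :=
  Measurable p ∧ (∀ᵐ x ∂(volume : Measure (Fin d → ℝ)), 0 ≤ p x) ∧ (∫ x, p x = 1) ∧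
    ∀ x, x ∉ Set.Icc (0 : Fin d → ℝ) 1 → p x = 0

/-- `p` has NL-spectrum `(w, L)` (sequences `0`-indexed: index `i` is the paper's `i+1`). -/
def HasNLSpectrum (d : ℕ) (p : (Fin d → ℝ) → ℝ) (w L : ℕ → ℝ) : Prop :=
  ∃ q : ℕ → Fin d → ℝ → ℝ,
    (∀ i, 0 ≤ w i) ∧ 0 < w 0 ∧ HasSum w 1 ∧
    (∀ i j, IsPdf1 (q i j) ∧ ∀ x y, |q i j x - q i j y| ≤ L i * |x - y|) ∧
    ∀ᵐ x ∂(volume : Measure (Fin d → ℝ)), p x = ∑' i, w i * ∏ j, q i j (x j)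

/-- Membership in the NL-class `𝔙(W, L̃)` (sequences `0`-indexed). -/
def MemNLClass (d : ℕ) (p : (Fin d → ℝ) → ℝ) (W Lt : ℕ → ℝ) : Prop :=
  ∃ w L : ℕ → ℝ, HasNLSpectrum d p w L ∧
    ∀ k : ℕ, L k ≤ Lt k ∧ (∑' i, w (i + (k + 1))) ≤ W k

/-- Membership in `ℋ^k_{d,b}`: a convex combination of `k` products of `d` histograms. -/
def IsLowRankHist (d b k : ℕ) (q : (Fin d → ℝ) → ℝ) : Prop :=
  ∃ (w : Fin k → ℝ) (h : Fin k → Fin d → ℝ → ℝ),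
    (∀ i, 0 ≤ w i) ∧ (∑ i, w i = 1) ∧ (∀ i j, IsHist1 b (h i j)) ∧
    ∀ x, q x = ∑ i, w i * ∏ j, h i j (x j)


lemma integrable_of_pdf {α : Type*} [MeasurableSpace α] {μ : Measure α} {f : α → ℝ}
    (h1 : ∫ x, f x ∂μ = 1) : Integrable f μ := by
  by_contra h
  rw [integral_undef h] at h1
  norm_num at h1

lemma cont_nonneg {f : ℝ → ℝ} (hc : Continuous f)
    (h : ∀ᵐ x ∂(volume : Measure ℝ), 0 ≤ f x) : ∀ x, 0 ≤ f x := by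
  intro x
  by_contra hx
  have hopen : IsOpen (f ⁻¹' Set.Iio 0) := (isOpen_Iio).preimage hc
  have hnull : volume (f ⁻¹' Set.Iio 0) = 0 := by
    refine measure_mono_null ?_ (ae_iff.1 h)
    intro y hy
    simpa using hy
  have := hopen.eq_empty_of_measure_zero hnull
  have hmem : x ∈ f ⁻¹' Set.Iio 0 := by simpa using lt_of_not_ge hx
  simp [this] at hmem


lemma bin_bound {L u s : ℝ} (hs : 0 < s) (hL : 0 ≤ L) {f : ℝ → ℝ}
    (hc : Continuous f)
    (hlip : ∀ x y, |f x - f y| ≤ L * |x - y|) :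
    ∫ x in Set.Ioc u (u + s), |f x - (∫ y in Set.Ioc u (u + s), f y) / s|
      ≤ L * s ^ 2 / Real.sqrt 12 := by
  set I : Set ℝ := Set.Ioc u (u + s) with hI
  have hvol : volume I = ENNReal.ofReal s := by
    rw [hI, Real.volume_Ioc]; ring_nf
  haveI hfinI : IsFiniteMeasure (volume.restrict I) := by
    constructor
    rw [Measure.restrict_apply_univ, hvol]
    exact ENNReal.ofReal_lt_top
  have hvolR : (volume.restrict I) Set.univ = ENNReal.ofReal s := by
    rw [Measure.restrict_apply_univ, hvol]
  set m : ℝ := (∫ y in I, f y) / s with hm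
  set g : ℝ → ℝ := fun x => f x - m with hg
  have hgc : Continuous g := hc.sub continuous_const
  have hfint : IntegrableOn f I := hc.integrableOn_Ioc
  have hgint : IntegrableOn g I := hgc.integrableOn_Ioc
  have hg2int : IntegrableOn (fun x => g x ^ 2) I := (hgc.pow 2).integrableOn_Ioc
  have hconst : ∀ c : ℝ, ∫ _x in I, c = s * c := by
    intro c
    rw [setIntegral_const, measureReal_def, hvol, smul_eq_mul, ENNReal.toReal_ofReal hs.le]
  have hg0 : ∫ x in I, g x = 0 := by
    rw [hg]
    simp only
    rw [integral_sub hfint (integrable_const m), hconst, hm]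
    field_simp
    ring
  set V : ℝ := ∫ x in I, g x ^ 2 with hV
  have hVnn : 0 ≤ V := setIntegral_nonneg measurableSet_Ioc (fun x _ => sq_nonneg _)
  have key1 : ∀ x : ℝ, ∫ y in I, (g x - g y) ^ 2 = s * g x ^ 2 + V := by
    intro x
    have expand : ∀ y : ℝ, (g x - g y) ^ 2 = g x ^ 2 - (2 * g x) * g y + g y ^ 2 := by
      intro y; ring
    simp_rw [expand]
    have h1 : Integrable (fun y => g x ^ 2 - 2 * g x * g y) (volume.restrict I) :=
      (integrable_const _).sub (hgint.const_mul _)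
    rw [integral_add h1 hg2int, integral_sub (integrable_const _) (hgint.const_mul _),
      integral_const_mul, hg0, hconst]
    ring
  have key2 : ∫ x in I, (s * g x ^ 2 + V) = 2 * s * V := by
    have h1 : Integrable (fun x => s * g x ^ 2) (volume.restrict I) := hg2int.const_mul s
    rw [integral_add h1 (integrable_const V), integral_const_mul, hconst]
    ring
  have key3 : ∀ x : ℝ, ∫ y in I, (x - y) ^ 2 = ((x - u) ^ 3 - (x - u - s) ^ 3) / 3 := by
    intro x
    have hle : u ≤ u + s := by linarith
    rw [← intervalIntegral.integral_of_le hle,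
      intervalIntegral.integral_comp_sub_left (fun t => t ^ 2) x,
      integral_pow]
    push_cast
    ring_nf
  have bound1 : ∀ x ∈ I, s * g x ^ 2 + V ≤ L ^ 2 * (((x - u) ^ 3 - (x - u - s) ^ 3) / 3) := by
    intro x _
    rw [← key1 x]
    have hrhs : L ^ 2 * (((x - u) ^ 3 - (x - u - s) ^ 3) / 3) = ∫ y in I, L ^ 2 * (x - y) ^ 2 := by
      rw [integral_const_mul, key3]
    rw [hrhs]
    have hil : IntegrableOn (fun y => (g x - g y) ^ 2) I :=
      ((continuous_const.sub hgc).pow 2).integrableOn_Ioc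
    have hir : IntegrableOn (fun y => L ^ 2 * (x - y) ^ 2) I :=
      (continuous_const.mul ((continuous_const.sub continuous_id).pow 2)).integrableOn_Ioc
    refine integral_mono hil hir (fun y => ?_)
    have h1 : (g x - g y) ^ 2 = |f x - f y| ^ 2 := by
      rw [sq_abs]; simp only [hg]; ring_nf
    rw [h1]
    calc |f x - f y| ^ 2 ≤ (L * |x - y|) ^ 2 := by
          exact pow_le_pow_left₀ (abs_nonneg _) (hlip x y) 2
      _ = L ^ 2 * (x - y) ^ 2 := by rw [mul_pow, sq_abs]
  have poly : ∫ x in I, (((x - u) ^ 3 - (x - u - s) ^ 3) / 3) = s ^ 4 / 6 := by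
    have hle : u ≤ u + s := by linarith
    rw [← intervalIntegral.integral_of_le hle]
    have : ∀ x : ℝ, ((x - u) ^ 3 - (x - u - s) ^ 3) / 3
        = ((x - u) ^ 3 - ((x - (u + s))) ^ 3) / 3 := by intro x; ring_nf
    have hd : ∀ x ∈ Set.uIcc u (u + s), HasDerivAt
        (fun t => ((t - u) ^ 4 - (t - u - s) ^ 4) / 12) (((x - u) ^ 3 - (x - u - s) ^ 3) / 3) x := by
      intro x _
      have h1 : HasDerivAt (fun t : ℝ => ((t - u) ^ 4 - (t - u - s) ^ 4) / 12)
          ((4 * (x - u) ^ 3 * 1 - 4 * (x - u - s) ^ 3 * 1) / 12) x := by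
        have ha : HasDerivAt (fun t : ℝ => t - u) 1 x := (hasDerivAt_id x).sub_const u
        have hb : HasDerivAt (fun t : ℝ => t - u - s) 1 x := ((hasDerivAt_id x).sub_const u).sub_const s
        have ha4 : HasDerivAt (fun t : ℝ => (t - u) ^ 4) (4 * (x - u) ^ 3 * 1) x := by
          simpa using ha.fun_pow 4
        have hb4 : HasDerivAt (fun t : ℝ => (t - u - s) ^ 4) (4 * (x - u - s) ^ 3 * 1) x := by
          simpa using hb.fun_pow 4
        exact (ha4.sub hb4).div_const 12
      convert h1 using 1
      ring
    rw [intervalIntegral.integral_eq_sub_of_hasDerivAt hd]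
    · ring_nf
    · apply ContinuousOn.intervalIntegrable
      exact (((continuous_id.sub continuous_const).pow 3).sub
        (((continuous_id.sub continuous_const).sub continuous_const).pow 3)).div_const 3 |>.continuousOn
  have bound2 : 2 * s * V ≤ L ^ 2 * (s ^ 4 / 6) := by
    rw [← key2]
    have : L ^ 2 * (s ^ 4 / 6) = ∫ x in I, L ^ 2 * (((x - u) ^ 3 - (x - u - s) ^ 3) / 3) := by
      rw [integral_const_mul, poly]
    rw [this]
    have hil : IntegrableOn (fun x => s * g x ^ 2 + V) I := (hg2int.const_mul s).add (integrable_const V)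
    have hir : IntegrableOn (fun x => L ^ 2 * (((x - u) ^ 3 - (x - u - s) ^ 3) / 3)) I := by
      apply Continuous.integrableOn_Ioc
      exact continuous_const.mul ((((continuous_id.sub continuous_const).pow 3).sub
        (((continuous_id.sub continuous_const).sub continuous_const).pow 3)).div_const 3)
    exact setIntegral_mono_on hil hir measurableSet_Ioc bound1
  have hVbound : V ≤ L ^ 2 * s ^ 3 / 12 := by nlinarith [bound2, hs, hVnn]
  have hCS : ∫ x in I, |g x| ≤ Real.sqrt (V * s) := by
    have hpq : Real.HolderConjugate 2 2 := by constructor <;> norm_num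
    obtain ⟨C, hC⟩ :=
      (isCompact_Icc (a := u) (b := u + s)).exists_bound_of_continuousOn hgc.continuousOn
    have hmem1 : MemLp (fun x => |g x|) (ENNReal.ofReal 2) (volume.restrict I) := by
      refine MemLp.of_bound (hgc.abs.aestronglyMeasurable.restrict) C ?_
      refine (ae_restrict_iff' measurableSet_Ioc).2 (Eventually.of_forall fun x hx => ?_)
      have := hC x (Set.Ioc_subset_Icc_self hx)
      simpa [Real.norm_eq_abs, abs_abs] using this
    have hmem2 : MemLp (fun _ : ℝ => (1 : ℝ)) (ENNReal.ofReal 2) (volume.restrict I) :=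
      memLp_const 1
    have hcs := integral_mul_le_Lp_mul_Lq_of_nonneg hpq
      (Eventually.of_forall fun x => abs_nonneg (g x))
      (Eventually.of_forall fun _ => zero_le_one) hmem1 hmem2
    simp only [mul_one] at hcs
    have e1 : ∫ x in I, |g x| ^ (2 : ℝ) = V := by
      rw [hV]
      apply integral_congr_ae
      filter_upwards with x
      rw [Real.rpow_two, sq_abs]
    have e2 : ∫ _x in I, (1 : ℝ) ^ (2 : ℝ) = s := by
      simp only [Real.one_rpow]
      simpa using hconst 1
    rw [e1, e2] at hcs
    calc ∫ x in I, |g x| ≤ V ^ (1 / (2:ℝ)) * s ^ (1 / (2:ℝ)) := hcs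
      _ = Real.sqrt V * Real.sqrt s := by rw [← Real.sqrt_eq_rpow, ← Real.sqrt_eq_rpow]
      _ = Real.sqrt (V * s) := (Real.sqrt_mul hVnn s).symm
  have hfinal : Real.sqrt (V * s) ≤ L * s ^ 2 / Real.sqrt 12 := by
    have h1 : Real.sqrt (V * s) ≤ Real.sqrt ((L * s ^ 2) ^ 2 / 12) := by
      apply Real.sqrt_le_sqrt
      nlinarith [hVbound, hs]
    calc Real.sqrt (V * s) ≤ Real.sqrt ((L * s ^ 2) ^ 2 / 12) := h1
      _ = Real.sqrt ((L * s ^ 2) ^ 2) / Real.sqrt 12 := by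
          rw [Real.sqrt_div (sq_nonneg _)]
      _ = L * s ^ 2 / Real.sqrt 12 := by
          rw [Real.sqrt_sq (by positivity)]
  calc ∫ x in I, |f x - m| = ∫ x in I, |g x| := rfl
    _ ≤ Real.sqrt (V * s) := hCS
    _ ≤ L * s ^ 2 / Real.sqrt 12 := hfinal

lemma hist_approx_s9 {b : ℕ} (hb : 1 ≤ b) {L : ℝ} {f : ℝ → ℝ}
    (hc : Continuous f) (hnn : ∀ x, 0 ≤ f x)
    (hlip : ∀ x y, |f x - f y| ≤ L * |x - y|)
    (hint : Integrable f) (h1 : ∫ x, f x = 1)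
    (hout : ∀ᵐ x ∂(volume : Measure ℝ), x ∉ Set.Icc (0:ℝ) 1 → f x = 0) :
    ∃ h : ℝ → ℝ, IsHist1 b h ∧ Measurable h ∧ (∀ x, 0 ≤ h x) ∧ Integrable h ∧
      ∫ x, |f x - h x| ≤ L / (Real.sqrt 12 * b) := by
  have hb' : (0:ℝ) < b := by exact_mod_cast hb
  have hL : 0 ≤ L := by
    have := hlip 0 1
    simp only [zero_sub, abs_neg, abs_one, mul_one] at this
    exact le_trans (abs_nonneg _) this
  set Bin : Fin b → Set ℝ := fun m => Set.Ico ((m.val : ℝ) / b) (((m.val : ℝ) + 1) / b) with hBin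
  set c : Fin b → ℝ := fun m => b * ∫ x in Bin m, f x with hcdef
  set h : ℝ → ℝ := fun x => ∑ m : Fin b, c m * Set.indicator (Bin m) 1 x with hh
  have hcnn : ∀ m, 0 ≤ c m := fun m =>
    mul_nonneg hb'.le (setIntegral_nonneg measurableSet_Ico (fun x _ => hnn x))
  have hBinMeas : ∀ m, MeasurableSet (Bin m) := fun m => measurableSet_Ico
  have hBinVol : ∀ m, volume (Bin m) = ENNReal.ofReal (1 / b) := by
    intro m
    rw [hBin]
    simp only [Real.volume_Ico]
    congr 1
    ring
  -- disjointness
  have hdisj : ∀ (m n : Fin b), m ≠ n → Disjoint (Bin m) (Bin n) := by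
    intro m n hmn
    rw [Set.disjoint_left]
    rintro x ⟨hm1, hm2⟩ ⟨hn1, hn2⟩
    rcases lt_or_gt_of_ne (fun e => hmn (Fin.ext e)) with hlt | hlt
    · have h1 : ((m.val : ℝ) + 1) ≤ n.val := by exact_mod_cast hlt
      have h2 : ((m.val : ℝ) + 1) / b ≤ (n.val : ℝ) / b := by gcongr
      linarith
    · have h1 : ((n.val : ℝ) + 1) ≤ m.val := by exact_mod_cast hlt
      have h2 : ((n.val : ℝ) + 1) / b ≤ (m.val : ℝ) / b := by gcongr
      linarith
  -- union of bins
  have hunion : Set.Ico (0:ℝ) 1 = ⋃ m ∈ (Finset.univ : Finset (Fin b)), Bin m := by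
    ext x
    simp only [Set.mem_iUnion, Finset.mem_univ, Set.mem_Ico, exists_true_left, hBin,
      exists_prop, true_and]
    constructor
    · rintro ⟨hx0, hx1⟩
      have hxb0 : (0:ℝ) ≤ x * b := mul_nonneg hx0 hb'.le
      have hflnn : 0 ≤ ⌊x * b⌋ := Int.floor_nonneg.2 hxb0
      have hfllt : ⌊x * b⌋ < b := by
        apply Int.floor_lt.2
        push_cast
        calc x * b < 1 * b := by exact mul_lt_mul_of_pos_right hx1 hb'
          _ = b := one_mul _
      have hlt : ⌊x * b⌋.toNat < b := by omega
      refine ⟨⟨⌊x * b⌋.toNat, hlt⟩, ?_, ?_⟩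
      · have : ((⌊x * b⌋.toNat : ℝ)) ≤ x * b := by
          have e : ((⌊x * b⌋.toNat : ℝ)) = ((⌊x * b⌋ : ℤ) : ℝ) := by
            exact_mod_cast congrArg (fun z : ℤ => (z : ℝ)) (Int.toNat_of_nonneg hflnn)
          rw [e]
          exact Int.floor_le _
        calc ((⌊x * b⌋.toNat : ℝ)) / b ≤ (x * b) / b := by gcongr
          _ = x := by field_simp
      · have : x * b < (⌊x * b⌋.toNat : ℝ) + 1 := by
          have e : ((⌊x * b⌋.toNat : ℝ)) = ((⌊x * b⌋ : ℤ) : ℝ) := by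
            exact_mod_cast congrArg (fun z : ℤ => (z : ℝ)) (Int.toNat_of_nonneg hflnn)
          rw [e]
          exact Int.lt_floor_add_one _
        calc x = (x * b) / b := by field_simp
          _ < ((⌊x * b⌋.toNat : ℝ) + 1) / b := by gcongr
    · rintro ⟨m, hm1, hm2⟩
      constructor
      · refine le_trans ?_ hm1
        positivity
      · refine lt_of_lt_of_le hm2 ?_
        have : ((m.val : ℝ) + 1) ≤ b := by exact_mod_cast m.isLt
        calc ((m.val : ℝ) + 1) / b ≤ (b:ℝ) / b := by gcongr
          _ = 1 := by field_simp
  -- integrability of histogram pieces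
  have hindint : ∀ m : Fin b, Integrable (fun x => c m * Set.indicator (Bin m) 1 x) := by
    intro m
    apply Integrable.const_mul
    rw [integrable_indicator_iff (hBinMeas m)]
    refine integrableOn_const ?_
    rw [hBinVol m]
    exact ENNReal.ofReal_ne_top
  have hinth : Integrable h := by
    rw [hh]
    exact integrable_finset_sum _ (fun m _ => hindint m)
  have hmeash : Measurable h := by
    rw [hh]
    exact Finset.measurable_sum _ (fun m _ =>
      ((measurable_one.indicator (hBinMeas m)).const_mul _))
  have hnnh : ∀ x, 0 ≤ h x := by
    intro x
    rw [hh]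
    apply Finset.sum_nonneg
    intro m _
    exact mul_nonneg (hcnn m) (Set.indicator_nonneg (fun _ _ => zero_le_one) x)
  -- f vanishes a.e. outside [0,1)
  have hne1 : ∀ᵐ (x : ℝ) ∂volume, x ≠ (1:ℝ) := by
    rw [ae_iff]
    have : {x : ℝ | ¬ x ≠ 1} = {(1:ℝ)} := by ext x; simp
    rw [this]
    exact Real.volume_singleton
  have hout' : ∀ᵐ (x : ℝ) ∂volume, x ∉ Set.Ico (0:ℝ) 1 → f x = 0 := by
    filter_upwards [hout, hne1] with x hx hx1 hxmem
    apply hx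
    rintro ⟨c1, c2⟩
    exact hxmem ⟨c1, lt_of_le_of_ne c2 hx1⟩
  have hfout : ∫ x in (Set.Ico (0:ℝ) 1)ᶜ, f x = 0 := by
    apply integral_eq_zero_of_ae
    rw [EventuallyEq, ae_restrict_iff' measurableSet_Ico.compl]
    filter_upwards [hout'] with x hx hxc
    exact hx hxc
  have hIco1 : ∫ x in Set.Ico (0:ℝ) 1, f x = 1 := by
    have := integral_add_compl (s := Set.Ico (0:ℝ) 1) measurableSet_Ico hint (f := f)
    rw [hfout, h1] at this
    linarith
  have keysum : ∀ F : ℝ → ℝ, Integrable F →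
      ∫ x in Set.Ico (0:ℝ) 1, F x = ∑ m : Fin b, ∫ x in Bin m, F x := by
    intro F hF
    rw [hunion, integral_biUnion_finset Finset.univ (fun m _ => hBinMeas m)
      (fun m _ n _ hmn => hdisj m n hmn) (fun m _ => hF.integrableOn)]
  -- integral of h is 1
  have hinth1 : ∫ x, h x = 1 := by
    rw [hh]
    rw [integral_finset_sum _ (fun m _ => hindint m)]
    have e1 : ∀ m : Fin b, ∫ x, c m * Set.indicator (Bin m) 1 x = ∫ x in Bin m, f x := by
      intro m
      rw [integral_const_mul, integral_indicator_one (hBinMeas m), measureReal_def, hBinVol m,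
        ENNReal.toReal_ofReal (by positivity), hcdef]
      simp only
      field_simp
    simp_rw [e1]
    rw [← keysum f hint, hIco1]
  have hIsHist : IsHist1 b h := ⟨c, hcnn, fun x => by rw [hh], hinth1⟩
  -- h constant on each bin
  have hpt : ∀ (m : Fin b) (x : ℝ), x ∈ Bin m → h x = c m := by
    intro m x hx
    rw [hh]
    simp only
    rw [Finset.sum_eq_single m]
    · rw [Set.indicator_of_mem hx]
      simp
    · intro m' _ hne
      rw [Set.indicator_of_notMem]
      · ring
      · intro hmem
        exact (Set.disjoint_left.1 (hdisj m' m hne) hmem) hx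
    · intro hm; exact absurd (Finset.mem_univ m) hm
  -- the error bound
  have hdiffint : Integrable (fun x => |f x - h x|) := (hint.sub hinth).abs
  have hsqrt12 : (0:ℝ) < Real.sqrt 12 := Real.sqrt_pos.2 (by norm_num)
  have hBinIoc : ∀ m : Fin b, ∀ F : ℝ → ℝ,
      ∫ x in Bin m, F x = ∫ x in Set.Ioc ((m.val:ℝ)/b) (((m.val:ℝ)+1)/b), F x := by
    intro m F
    rw [hBin]
    exact setIntegral_congr_set Ico_ae_eq_Ioc
  have hperbin : ∀ m : Fin b, ∫ x in Bin m, |f x - h x| ≤ L * (1/b)^2 / Real.sqrt 12 := by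
    intro m
    have e0 : ∫ x in Bin m, |f x - h x| = ∫ x in Bin m, |f x - c m| := by
      apply setIntegral_congr_fun (hBinMeas m)
      intro x hx
      simp only [hpt m x hx]
    have hub : ((m.val:ℝ)+1)/b = (m.val:ℝ)/b + 1/b := by ring
    have hceq : c m = (∫ y in Set.Ioc ((m.val:ℝ)/b) ((m.val:ℝ)/b + 1/b), f y) / (1/b) := by
      rw [hcdef]
      simp only
      rw [hBinIoc m f, hub]
      field_simp
    rw [e0, hBinIoc m, hub, hceq]
    exact bin_bound (by positivity) hL hc hlip
  have hcompl : ∫ x in (Set.Ico (0:ℝ) 1)ᶜ, |f x - h x| = 0 := by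
    apply integral_eq_zero_of_ae
    rw [EventuallyEq, ae_restrict_iff' measurableSet_Ico.compl]
    filter_upwards [hout'] with x hx hxc
    have hfx : f x = 0 := hx hxc
    have hhx : h x = 0 := by
      rw [hh]
      apply Finset.sum_eq_zero
      intro m _
      rw [Set.indicator_of_notMem]
      · ring
      · intro hmem
        apply hxc
        rw [hunion]
        exact Set.mem_biUnion (Finset.mem_univ m) hmem
    simp [hfx, hhx]
  have htotal : ∫ x, |f x - h x| ≤ L / (Real.sqrt 12 * b) := by
    rw [← integral_add_compl (s := Set.Ico (0:ℝ) 1) measurableSet_Ico hdiffint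
      (f := fun x => |f x - h x|), hcompl, add_zero, keysum _ hdiffint]
    calc ∑ m : Fin b, ∫ x in Bin m, |f x - h x|
        ≤ ∑ _m : Fin b, L * (1/b)^2 / Real.sqrt 12 :=
          Finset.sum_le_sum (fun m _ => hperbin m)
      _ = b * (L * (1/b)^2 / Real.sqrt 12) := by
          rw [Finset.sum_const, Finset.card_univ, Fintype.card_fin, nsmul_eq_mul]
      _ = L / (Real.sqrt 12 * b) := by
          field_simp
  exact ⟨h, hIsHist, hmeash, hnnh, hinth, htotal⟩

lemma unif_hist (b : ℕ) (hb : 1 ≤ b) :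
    ∃ h : ℝ → ℝ, IsHist1 b h ∧ Measurable h ∧ (∀ x, 0 ≤ h x) ∧ Integrable h := by
  have hb' : (0:ℝ) < b := by exact_mod_cast hb
  set Bin : Fin b → Set ℝ := fun m => Set.Ico ((m.val : ℝ) / b) (((m.val : ℝ) + 1) / b) with hBin
  have hBinMeas : ∀ m, MeasurableSet (Bin m) := fun m => measurableSet_Ico
  have hBinVol : ∀ m, volume (Bin m) = ENNReal.ofReal (1 / b) := by
    intro m
    rw [hBin]
    simp only [Real.volume_Ico]
    congr 1
    ring
  set h : ℝ → ℝ := fun x => ∑ m : Fin b, (1:ℝ) * Set.indicator (Bin m) 1 x with hh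
  have hind : ∀ m : Fin b, Integrable (fun x => (1:ℝ) * Set.indicator (Bin m) 1 x) := by
    intro m
    apply Integrable.const_mul
    rw [integrable_indicator_iff (hBinMeas m)]
    refine integrableOn_const ?_
    rw [hBinVol m]
    exact ENNReal.ofReal_ne_top
  have hint : Integrable h := by
    rw [hh]; exact integrable_finset_sum _ (fun m _ => hind m)
  have h1 : ∫ x, h x = 1 := by
    rw [hh, integral_finset_sum _ (fun m _ => hind m)]
    have e1 : ∀ m : Fin b, ∫ x, (1:ℝ) * Set.indicator (Bin m) 1 x = 1 / b := by
      intro m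
      rw [integral_const_mul, integral_indicator_one (hBinMeas m), measureReal_def, hBinVol m,
        ENNReal.toReal_ofReal (by positivity)]
      ring
    simp_rw [e1]
    rw [Finset.sum_const, Finset.card_univ, Fintype.card_fin, nsmul_eq_mul]
    field_simp
  refine ⟨h, ⟨fun _ => 1, fun _ => zero_le_one, fun x => by rw [hh], h1⟩, ?_, ?_, hint⟩
  · rw [hh]
    exact Finset.measurable_sum _ (fun m _ =>
      ((measurable_one.indicator (hBinMeas m)).const_mul _))
  · intro x
    rw [hh]
    apply Finset.sum_nonneg
    intro m _
    exact mul_nonneg zero_le_one (Set.indicator_nonneg (fun _ _ => zero_le_one) x)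

lemma integral_prod_sub_prod_le {d : ℕ} (a c : Fin d → ℝ → ℝ)
    (hna : ∀ j x, 0 ≤ a j x) (hnc : ∀ j x, 0 ≤ c j x)
    (hia : ∀ j, Integrable (a j)) (hic : ∀ j, Integrable (c j))
    (h1a : ∀ j, ∫ x, a j x = 1) (h1c : ∀ j, ∫ x, c j x = 1) :
    ∫ x : Fin d → ℝ, |(∏ j, a j (x j)) - ∏ j, c j (x j)|
      ≤ ∑ j : Fin d, ∫ t : ℝ, |a j t - c j t| := by
  classical
  set M : ℕ → (Fin d → ℝ) → ℝ :=
    fun n x => ∏ j : Fin d, (if (j : ℕ) < n then c j else a j) (x j) with hM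
  set E : Fin d → (Fin d → ℝ) → ℝ := fun j x =>
    |a j (x j) - c j (x j)| *
      ∏ l ∈ Finset.univ.erase j, (if (l : ℕ) < (j : ℕ) then c l else a l) (x l) with hE
  set F : Fin d → Fin d → ℝ → ℝ := fun j l =>
    if l = j then (fun t => |a j t - c j t|) else if (l : ℕ) < (j : ℕ) then c l else a l with hF
  have hM0 : ∀ x, M 0 x = ∏ j : Fin d, a j (x j) := by
    intro x
    apply Finset.prod_congr rfl
    intro j _
    simp
  have hMd : ∀ x, M d x = ∏ j : Fin d, c j (x j) := by
    intro x
    apply Finset.prod_congr rfl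
    intro j _
    rw [if_pos j.isLt]
  have hstep : ∀ (j : Fin d) (x : Fin d → ℝ),
      M ((j : ℕ) + 1) x - M (j : ℕ) x
        = (c j (x j) - a j (x j)) *
          ∏ l ∈ Finset.univ.erase j, (if (l : ℕ) < (j : ℕ) then c l else a l) (x l) := by
    intro j x
    have hsame : ∀ l ∈ Finset.univ.erase j,
        (if (l : ℕ) < (j : ℕ) + 1 then c l else a l) (x l)
          = (if (l : ℕ) < (j : ℕ) then c l else a l) (x l) := by
      intro l hl
      have hlj : l ≠ j := (Finset.mem_erase.1 hl).1
      have hvne : (l : ℕ) ≠ (j : ℕ) := fun e => hlj (Fin.ext e)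
      by_cases hc1 : (l : ℕ) < (j : ℕ)
      · rw [if_pos (Nat.lt_succ_of_lt hc1), if_pos hc1]
      · rw [if_neg (by omega), if_neg hc1]
    have e1 : M ((j : ℕ) + 1) x = c j (x j) *
        ∏ l ∈ Finset.univ.erase j, (if (l : ℕ) < (j : ℕ) then c l else a l) (x l) := by
      rw [hM]
      simp only
      rw [← Finset.mul_prod_erase Finset.univ
        (fun l : Fin d => (if (l : ℕ) < (j : ℕ) + 1 then c l else a l) (x l)) (Finset.mem_univ j)]
      rw [if_pos (Nat.lt_succ_self (j : ℕ))]
      congr 1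
      exact Finset.prod_congr rfl hsame
    have e2 : M (j : ℕ) x = a j (x j) *
        ∏ l ∈ Finset.univ.erase j, (if (l : ℕ) < (j : ℕ) then c l else a l) (x l) := by
      rw [hM]
      simp only
      rw [← Finset.mul_prod_erase Finset.univ
        (fun l : Fin d => (if (l : ℕ) < (j : ℕ) then c l else a l) (x l)) (Finset.mem_univ j)]
      rw [if_neg (lt_irrefl ((j : ℕ)))]
    rw [e1, e2]
    ring
  have hpt : ∀ x : Fin d → ℝ,
      |(∏ j, a j (x j)) - ∏ j, c j (x j)| ≤ ∑ j : Fin d, E j x := by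
    intro x
    have htel : (∑ n ∈ Finset.range d, (M (n + 1) x - M n x)) = M d x - M 0 x :=
      Finset.sum_range_sub (fun n => M n x) d
    have h1 : |(∏ j, a j (x j)) - ∏ j, c j (x j)| = |M d x - M 0 x| := by
      rw [hM0, hMd, abs_sub_comm]
    rw [h1, ← htel]
    calc |∑ n ∈ Finset.range d, (M (n + 1) x - M n x)|
        ≤ ∑ n ∈ Finset.range d, |M (n + 1) x - M n x| := Finset.abs_sum_le_sum_abs _ _
      _ = ∑ j : Fin d, |M ((j : ℕ) + 1) x - M (j : ℕ) x| := by
          rw [Fin.sum_univ_eq_sum_range (fun n => |M (n + 1) x - M n x|) d]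
      _ = ∑ j : Fin d, E j x := by
          apply Finset.sum_congr rfl
          intro j _
          rw [hstep j x, abs_mul, abs_sub_comm, hE]
          congr 1
          apply abs_of_nonneg
          apply Finset.prod_nonneg
          intro l _
          by_cases hcl : (l : ℕ) < (j : ℕ)
          · rw [if_pos hcl]; exact hnc l _
          · rw [if_neg hcl]; exact hna l _
  have hEprod : ∀ j : Fin d, E j = fun x => ∏ l : Fin d, F j l (x l) := by
    intro j
    funext x
    rw [hE, hF]
    simp only
    rw [← Finset.mul_prod_erase Finset.univ (fun l : Fin d => (if l = j then (fun t => |a j t - c j t|)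
      else if (l : ℕ) < (j : ℕ) then c l else a l) (x l)) (Finset.mem_univ j), if_pos rfl]
    congr 1
    apply Finset.prod_congr rfl
    intro l hl
    rw [if_neg (Finset.mem_erase.1 hl).1]
  have hFint : ∀ j l, Integrable (F j l) := by
    intro j l
    rw [hF]
    simp only
    split_ifs with h1 h2
    · exact (hia j |>.sub (hic j)).abs
    · exact hic l
    · exact hia l
  have hEint : ∀ j, Integrable (E j) := by
    intro j
    rw [hEprod j]
    exact Integrable.fintype_prod (fun l => hFint j l)
  have hEinteg : ∀ j, ∫ x : Fin d → ℝ, E j x = ∫ t : ℝ, |a j t - c j t| := by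
    intro j
    rw [hEprod j]
    rw [MeasureTheory.integral_fintype_prod_volume_eq_prod (F j)]
    rw [Finset.prod_eq_single j]
    · rw [hF]; simp
    · intro l _ hl
      rw [hF]
      simp only [if_neg hl]
      split_ifs
      · exact h1c l
      · exact h1a l
    · intro hj; exact absurd (Finset.mem_univ j) hj
  have hLHSint : Integrable (fun x : Fin d → ℝ => |(∏ j, a j (x j)) - ∏ j, c j (x j)|) := by
    apply Integrable.abs
    exact (Integrable.fintype_prod hia).sub (Integrable.fintype_prod hic)
  calc ∫ x : Fin d → ℝ, |(∏ j, a j (x j)) - ∏ j, c j (x j)|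
      ≤ ∫ x : Fin d → ℝ, ∑ j : Fin d, E j x := by
        apply integral_mono hLHSint (integrable_finset_sum _ (fun j _ => hEint j)) hpt
    _ = ∑ j : Fin d, ∫ x : Fin d → ℝ, E j x :=
        integral_finset_sum _ (fun j _ => hEint j)
    _ = ∑ j : Fin d, ∫ t : ℝ, |a j t - c j t| := by
        exact Finset.sum_congr rfl (fun j _ => hEinteg j)

/-- **Lemma 11.** Bias bound over an NL-class.  The paper's `k ∈ ℕ = {1,2,...}`
is represented as `k+1` with `k : ℕ`; by the `0`-indexing convention, the paper's
`L̃_k` and `W_k` are `Lt k` and `W k`. -/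
theorem nl_class_bias_bound
    (d b k : ℕ) (hd : 1 ≤ d) (hb : 1 ≤ b)
    (W Lt : ℕ → ℝ)
    (hW0 : ∀ i, 0 ≤ W i) (hWanti : ∀ i, W (i + 1) ≤ W i)
    (hWlim : Tendsto W atTop (nhds 0))
    (hL0 : ∀ i, 0 ≤ Lt i) (hLmono : ∀ i, Lt i ≤ Lt (i + 1))
    (p : (Fin d → ℝ) → ℝ) (hp : MemD d p) (hcls : MemNLClass d p W Lt) :
    ∃ h : (Fin d → ℝ) → ℝ, IsLowRankHist d b (k + 1) h ∧
      ∫ x, |p x - h x| ≤ (d : ℝ) * Lt k / (Real.sqrt 12 * b) + 2 * W k := by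
  classical
  obtain ⟨w, L, ⟨q, hw0, hw0pos, hwsum, hq, hrep⟩, hk⟩ := hcls
  have hb' : (0:ℝ) < b := by exact_mod_cast hb
  have hqmeas : ∀ i j, Measurable (q i j) := fun i j => (hq i j).1.1
  have hqaenn : ∀ i j, ∀ᵐ x ∂(volume : Measure ℝ), 0 ≤ q i j x := fun i j => (hq i j).1.2.1
  have hqint1 : ∀ i j, ∫ x, q i j x = 1 := fun i j => (hq i j).1.2.2
  have hqint : ∀ i j, Integrable (q i j) := fun i j => integrable_of_pdf (hqint1 i j)
  have hqlip : ∀ i j x y, |q i j x - q i j y| ≤ L i * |x - y| := fun i j => (hq i j).2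
  have hqcont : ∀ i j, Continuous (q i j) := by
    intro i j
    apply LipschitzWith.continuous (K := Real.toNNReal (L i))
    apply LipschitzWith.of_dist_le_mul
    intro x y
    rw [Real.dist_eq, Real.dist_eq]
    calc |q i j x - q i j y| ≤ L i * |x - y| := hqlip i j x y
      _ ≤ (Real.toNNReal (L i) : ℝ) * |x - y| :=
          mul_le_mul_of_nonneg_right (Real.le_coe_toNNReal _) (abs_nonneg _)
  have hqnn : ∀ i j x, 0 ≤ q i j x := fun i j => cont_nonneg (hqcont i j) (hqaenn i j)
  -- products
  set Q : ℕ → (Fin d → ℝ) → ℝ := fun i x => ∏ j, q i j (x j) with hQ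
  set G : ℕ → (Fin d → ℝ) → ℝ := fun i x => w i * Q i x with hG
  have hQint : ∀ i, Integrable (Q i) := fun i => Integrable.fintype_prod (fun j => hqint i j)
  have hQinteg : ∀ i, ∫ x, Q i x = 1 := by
    intro i
    rw [hQ]
    simp only
    rw [MeasureTheory.integral_fintype_prod_volume_eq_prod (fun j => q i j)]
    rw [Finset.prod_congr rfl (fun j _ => hqint1 i j), Finset.prod_const_one]
  have hQnn : ∀ i x, 0 ≤ Q i x := fun i x =>
    Finset.prod_nonneg (fun j _ => hqnn i j (x j))
  have hQmeas : ∀ i, Measurable (Q i) := fun i =>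
    Finset.measurable_prod _ (fun j _ => (hqmeas i j).comp (measurable_pi_apply j))
  have hGint : ∀ i, Integrable (G i) := fun i => (hQint i).const_mul _
  have hGinteg : ∀ i, ∫ x, G i x = w i := by
    intro i
    rw [hG]
    simp only
    rw [integral_const_mul, hQinteg i, mul_one]
  have hGnn : ∀ i x, 0 ≤ G i x := fun i x => mul_nonneg (hw0 i) (hQnn i x)
  have hGmeas : ∀ i, Measurable (G i) := fun i => (hQmeas i).const_mul _
  -- a.e. summability
  have hofReal : ∀ i, ∫⁻ x, ENNReal.ofReal (G i x) = ENNReal.ofReal (w i) := by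
    intro i
    rw [← ofReal_integral_eq_lintegral_ofReal (hGint i)
      (Eventually.of_forall (fun x => hGnn i x)), hGinteg i]
  have htsum1 : ∫⁻ x, ∑' i, ENNReal.ofReal (G i x) = 1 := by
    rw [lintegral_tsum (fun i => ((hGmeas i).ennreal_ofReal.aemeasurable))]
    simp_rw [hofReal]
    rw [← ENNReal.ofReal_tsum_of_nonneg hw0 hwsum.summable, hwsum.tsum_eq]
    exact ENNReal.ofReal_one
  have hsumm_ae : ∀ᵐ x ∂(volume : Measure (Fin d → ℝ)), Summable (fun i => G i x) := by
    have hmeas : Measurable (fun x => ∑' i, ENNReal.ofReal (G i x)) :=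
      Measurable.ennreal_tsum (fun i => (hGmeas i).ennreal_ofReal)
    have hae := ae_lt_top hmeas (by rw [htsum1]; exact ENNReal.one_ne_top)
    filter_upwards [hae] with x hx
    have := ENNReal.summable_toReal hx.ne
    apply Summable.congr this
    intro i
    exact ENNReal.toReal_ofReal (hGnn i x)
  -- vanishing outside the cube
  have hvanish : ∀ᵐ x ∂(volume : Measure (Fin d → ℝ)),
      x ∉ Set.Icc (0 : Fin d → ℝ) 1 → ∀ i, G i x = 0 := by
    filter_upwards [hrep, hsumm_ae] with x hx hsx hxout i
    have hp0 : p x = 0 := hp.2.2.2 x hxout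
    have hle : G i x ≤ ∑' m, G m x := Summable.le_tsum hsx i (fun m _ => hGnn m x)
    have : (∑' m, G m x) = 0 := by rw [← hx, hp0]
    exact le_antisymm (by rw [← this]; exact hle) (hGnn i x)
  -- support of the marginals
  have hsupp : ∀ i (j : Fin d), 0 < w i →
      (∀ᵐ t ∂(volume : Measure ℝ), t ∉ Set.Icc (0:ℝ) 1 → q i j t = 0) := by
    intro i j hwi
    set A : Set (Fin d → ℝ) := (fun x : Fin d → ℝ => x j) ⁻¹' (Set.Icc (0:ℝ) 1)ᶜ with hA
    have hAmeas : MeasurableSet A := (measurable_pi_apply j) (measurableSet_Icc.compl)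
    have hAsub : ∀ x ∈ A, x ∉ Set.Icc (0 : Fin d → ℝ) 1 := by
      intro x hx hmem
      exact hx ⟨hmem.1 j, hmem.2 j⟩
    have hQA0 : ∫ x in A, Q i x = 0 := by
      apply integral_eq_zero_of_ae
      rw [EventuallyEq, ae_restrict_iff' hAmeas]
      filter_upwards [hvanish] with x hx hxA
      have := hx (hAsub x hxA) i
      have hQ0 : w i * Q i x = 0 := this
      rcases mul_eq_zero.1 hQ0 with h | h
      · exact absurd h (ne_of_gt hwi)
      · exact h
    -- factorize the integral over A
    set Fj : Fin d → ℝ → ℝ := fun l =>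
      if l = j then Set.indicator ((Set.Icc (0:ℝ) 1)ᶜ) (q i l) else q i l with hFj
    have hFjint : ∀ l, Integrable (Fj l) := by
      intro l
      rw [hFj]
      simp only
      split_ifs
      · rw [integrable_indicator_iff measurableSet_Icc.compl]
        exact (hqint i l).integrableOn
      · exact hqint i l
    have hFjj : Fj j = Set.indicator ((Set.Icc (0:ℝ) 1)ᶜ) (q i j) := by
      rw [hFj]; simp
    have hprodeq : ∀ x : Fin d → ℝ, Set.indicator A (Q i) x = ∏ l, Fj l (x l) := by
      intro x
      by_cases hxA : x ∈ A
      · rw [Set.indicator_of_mem hxA, hQ]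
        simp only
        rw [← Finset.mul_prod_erase Finset.univ (fun l => Fj l (x l)) (Finset.mem_univ j),
          ← Finset.mul_prod_erase Finset.univ (fun l => q i l (x l)) (Finset.mem_univ j)]
        congr 1
        · rw [hFjj, Set.indicator_of_mem (show x j ∈ (Set.Icc (0:ℝ) 1)ᶜ from hxA)]
        · apply Finset.prod_congr rfl
          intro l hl
          rw [hFj]
          simp only [if_neg (Finset.mem_erase.1 hl).1]
      · rw [Set.indicator_of_notMem hxA]
        have : Fj j (x j) = 0 := by
          rw [hFjj]
          exact Set.indicator_of_notMem (show x j ∉ (Set.Icc (0:ℝ) 1)ᶜ from fun hmem => hxA hmem) _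
        rw [← Finset.prod_erase_mul Finset.univ (fun l => Fj l (x l)) (Finset.mem_univ j),
          this, mul_zero]
    have hfact : ∫ x in A, Q i x = ∫ t, Fj j t := by
      rw [← integral_indicator hAmeas]
      rw [show (fun x => Set.indicator A (Q i) x) = fun x : Fin d → ℝ => ∏ l, Fj l (x l) from
        funext hprodeq]
      rw [MeasureTheory.integral_fintype_prod_volume_eq_prod Fj]
      rw [Finset.prod_eq_single j]
      · intro l _ hl
        rw [hFj]
        simp only [if_neg hl]
        exact hqint1 i l
      · intro hj; exact absurd (Finset.mem_univ j) hj
    have hout0 : ∫ t in (Set.Icc (0:ℝ) 1)ᶜ, q i j t = 0 := by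
      have : ∫ t, Fj j t = ∫ t in (Set.Icc (0:ℝ) 1)ᶜ, q i j t := by
        rw [hFjj]
        exact integral_indicator measurableSet_Icc.compl
      rw [← this, ← hfact, hQA0]
    -- conclude a.e. vanishing
    have hnn' : 0 ≤ᵐ[volume.restrict ((Set.Icc (0:ℝ) 1)ᶜ)] q i j :=
      Eventually.of_forall (fun t => hqnn i j t)
    have hint' : Integrable (q i j) (volume.restrict ((Set.Icc (0:ℝ) 1)ᶜ)) :=
      (hqint i j).integrableOn
    have := (integral_eq_zero_iff_of_nonneg_ae hnn' hint').1 hout0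
    rw [EventuallyEq, ae_restrict_iff' measurableSet_Icc.compl] at this
    filter_upwards [this] with t ht htout
    exact ht htout
  -- choose histograms
  have hsqrt12 : (0:ℝ) < Real.sqrt 12 := Real.sqrt_pos.2 (by norm_num)
  have hLtmono : ∀ i, i ≤ k → Lt i ≤ Lt k := by
    intro i hik
    exact (monotone_nat_of_le_succ hLmono) hik
  have hHex : ∀ (i : ℕ) (j : Fin d), ∃ h : ℝ → ℝ,
      IsHist1 b h ∧ Measurable h ∧ (∀ x, 0 ≤ h x) ∧ Integrable h ∧
        ((i ≤ k ∧ 0 < w i) → ∫ t, |q i j t - h t| ≤ Lt k / (Real.sqrt 12 * b)) := by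
    intro i j
    by_cases hcase : i ≤ k ∧ 0 < w i
    · obtain ⟨h, hist, meas, nn, int, err⟩ := hist_approx_s9 hb (hqcont i j) (hqnn i j)
        (hqlip i j) (hqint i j) (hqint1 i j) (hsupp i j hcase.2)
      refine ⟨h, hist, meas, nn, int, fun _ => le_trans err ?_⟩
      have hLle : L i ≤ Lt k := le_trans (hk i).1 (hLtmono i hcase.1)
      gcongr
    · obtain ⟨h, hist, meas, nn, int⟩ := unif_hist b hb
      exact ⟨h, hist, meas, nn, int, fun hc => absurd hc hcase⟩
  choose H hH1 hH2 hH3 hH4 hH5 using hHex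
  -- products of histograms
  have hHinteg : ∀ i j, ∫ t, H i j t = 1 := fun i j => (hH1 i j).choose_spec.2.2
  set K : ℕ → (Fin d → ℝ) → ℝ := fun i x => ∏ j, H i j (x j) with hK
  have hKint : ∀ i, Integrable (K i) := fun i => Integrable.fintype_prod (fun j => hH4 i j)
  have hKinteg : ∀ i, ∫ x, K i x = 1 := by
    intro i
    rw [hK]
    simp only
    rw [MeasureTheory.integral_fintype_prod_volume_eq_prod (fun j => H i j)]
    rw [Finset.prod_congr rfl (fun j _ => hHinteg i j), Finset.prod_const_one]
  have hKnn : ∀ i x, 0 ≤ K i x := fun i x => Finset.prod_nonneg (fun j _ => hH3 i j (x j))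
  -- tail and weights
  have hpint : Integrable p := integrable_of_pdf hp.2.2.1
  set T := ∑' m, w (m + (k+1)) with hT
  have hTnn : 0 ≤ T := tsum_nonneg (fun m => hw0 _)
  have hTW : T ≤ W k := (hk k).2
  have hsplitsum : ∑ i ∈ Finset.range (k+1), w i + T = 1 := by
    rw [hT, Summable.sum_add_tsum_nat_add (k+1) hwsum.summable]
    exact hwsum.tsum_eq
  set wh : ℕ → ℝ := fun i => if i < k then w i else w k + T with hwh
  have hwhnn : ∀ i, 0 ≤ wh i := by
    intro i
    rw [hwh]
    simp only
    split_ifs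
    · exact hw0 i
    · exact add_nonneg (hw0 k) hTnn
  have hwhlt : ∀ i ∈ Finset.range k, wh i = w i := by
    intro i hi
    rw [hwh]
    simp only
    rw [if_pos (Finset.mem_range.1 hi)]
  have hwhk : wh k = w k + T := by
    rw [hwh]
    simp only
    rw [if_neg (lt_irrefl k)]
  set hfun : (Fin d → ℝ) → ℝ := fun x => ∑ i ∈ Finset.range (k+1), wh i * K i x with hhfun
  have hfunint : Integrable hfun := by
    rw [hhfun]
    exact integrable_finset_sum _ (fun i _ => (hKint i).const_mul _)
  set R : (Fin d → ℝ) → ℝ := fun x => p x - ∑ i ∈ Finset.range (k+1), G i x with hR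
  have hGsumint : Integrable (fun x : Fin d → ℝ => ∑ i ∈ Finset.range (k+1), G i x) :=
    integrable_finset_sum _ (fun i _ => hGint i)
  have hRint : Integrable R := hpint.sub hGsumint
  have hRnn : ∀ᵐ x ∂(volume : Measure (Fin d → ℝ)), 0 ≤ R x := by
    filter_upwards [hrep, hsumm_ae] with x hx hsx
    have hx' : p x = ∑' i, G i x := hx
    have e := Summable.sum_add_tsum_nat_add (f := fun i => G i x) (k+1) hsx
    have eR : R x = ∑' i, G (i + (k+1)) x := by
      rw [hR]
      simp only
      rw [hx', ← e]
      ring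
    rw [eR]
    exact tsum_nonneg (fun m => hGnn _ x)
  have hRinteg : ∫ x, R x = T := by
    rw [hR]
    simp only
    rw [integral_sub hpint hGsumint, integral_finset_sum _ (fun i _ => hGint i), hp.2.2.1,
      Finset.sum_congr rfl (fun i _ => hGinteg i)]
    linarith [hsplitsum]
  -- low-rank histogram structure
  have hlow : IsLowRankHist d b (k+1) hfun := by
    refine ⟨fun i => wh i.val, fun i j => H i.val j, fun i => hwhnn i.val, ?_,
      fun i j => hH1 i.val j, ?_⟩
    · rw [Fin.sum_univ_eq_sum_range (fun i => wh i) (k+1), Finset.sum_range_succ,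
        Finset.sum_congr rfl hwhlt, hwhk]
      have := hsplitsum
      rw [Finset.sum_range_succ] at this
      linarith
    · intro x
      rw [hhfun]
      simp only
      exact (Fin.sum_univ_eq_sum_range (fun i => wh i * K i x) (k+1)).symm
  -- decomposition
  have hdecomp : ∀ x, p x - hfun x =
      (∑ i ∈ Finset.range (k+1), w i * (Q i x - K i x)) - T * K k x + R x := by
    intro x
    have e : ∑ i ∈ Finset.range (k+1), wh i * K i x
        = (∑ i ∈ Finset.range (k+1), w i * K i x) + T * K k x := by
      rw [Finset.sum_range_succ, Finset.sum_range_succ (fun i => w i * K i x),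
        Finset.sum_congr rfl (fun i hi => by rw [hwhlt i hi]), hwhk]
      ring
    have e3 : ∑ i ∈ Finset.range (k+1), w i * (Q i x - K i x)
        = (∑ i ∈ Finset.range (k+1), G i x) - ∑ i ∈ Finset.range (k+1), w i * K i x := by
      rw [← Finset.sum_sub_distrib]
      apply Finset.sum_congr rfl
      intro i _
      rw [hG]
      ring
    have e4 : R x = p x - ∑ i ∈ Finset.range (k+1), G i x := by rw [hR]
    have e5 : hfun x = ∑ i ∈ Finset.range (k+1), wh i * K i x := by rw [hhfun]
    rw [e3, e4, e5, e]
    ring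
  -- the constant
  set C := (d:ℝ) * Lt k / (Real.sqrt 12 * b) with hC
  have hC0 : 0 ≤ C := by
    rw [hC]
    apply div_nonneg (mul_nonneg (by positivity) (hL0 k)) (by positivity)
  have hQKint : ∀ i, Integrable (fun x : Fin d → ℝ => |Q i x - K i x|) :=
    fun i => ((hQint i).sub (hKint i)).abs
  have hperi : ∀ i ∈ Finset.range (k+1), w i * ∫ x, |Q i x - K i x| ≤ w i * C := by
    intro i hi
    rcases (hw0 i).eq_or_lt with h0 | hwi
    · rw [← h0]
      simp
    · apply mul_le_mul_of_nonneg_left ?_ (hw0 i)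
      calc ∫ x, |Q i x - K i x| ≤ ∑ j : Fin d, ∫ t, |q i j t - H i j t| :=
            integral_prod_sub_prod_le (fun j => q i j) (fun j => H i j) (hqnn i) (hH3 i)
              (hqint i) (hH4 i) (hqint1 i) (hHinteg i)
        _ ≤ ∑ _j : Fin d, Lt k / (Real.sqrt 12 * b) :=
            Finset.sum_le_sum (fun j _ => hH5 i j ⟨Nat.lt_succ_iff.1 (Finset.mem_range.1 hi), hwi⟩)
        _ = C := by
            rw [Finset.sum_const, Finset.card_univ, Fintype.card_fin, nsmul_eq_mul, hC]
            ring
  have hsum_wC : ∑ i ∈ Finset.range (k+1), w i * ∫ x, |Q i x - K i x| ≤ C := by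
    calc ∑ i ∈ Finset.range (k+1), w i * ∫ x, |Q i x - K i x|
        ≤ ∑ i ∈ Finset.range (k+1), w i * C := Finset.sum_le_sum hperi
      _ = (∑ i ∈ Finset.range (k+1), w i) * C := by rw [Finset.sum_mul]
      _ ≤ 1 * C := mul_le_mul_of_nonneg_right (by linarith [hsplitsum, hTnn]) hC0
      _ = C := one_mul C
  -- a.e. pointwise bound
  set B : (Fin d → ℝ) → ℝ := fun x =>
    (∑ i ∈ Finset.range (k+1), w i * |Q i x - K i x|) + T * K k x + R x with hB
  have hBint : Integrable B := by
    rw [hB]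
    exact ((integrable_finset_sum _ (fun i _ => (hQKint i).const_mul (w i))).add
      ((hKint k).const_mul T)).add hRint
  have habs : ∀ᵐ x ∂(volume : Measure (Fin d → ℝ)), |p x - hfun x| ≤ B x := by
    filter_upwards [hRnn] with x hRx
    rw [hdecomp x, hB]
    simp only
    have h1 : |(∑ i ∈ Finset.range (k+1), w i * (Q i x - K i x)) - T * K k x + R x|
        ≤ |(∑ i ∈ Finset.range (k+1), w i * (Q i x - K i x)) - T * K k x| + |R x| :=
      abs_add_le _ _
    have h2 : |(∑ i ∈ Finset.range (k+1), w i * (Q i x - K i x)) - T * K k x|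
        ≤ |∑ i ∈ Finset.range (k+1), w i * (Q i x - K i x)| + |T * K k x| := abs_sub _ _
    have h3 : |∑ i ∈ Finset.range (k+1), w i * (Q i x - K i x)|
        ≤ ∑ i ∈ Finset.range (k+1), w i * |Q i x - K i x| := by
      refine (Finset.abs_sum_le_sum_abs _ _).trans (le_of_eq ?_)
      apply Finset.sum_congr rfl
      intro i _
      rw [abs_mul, abs_of_nonneg (hw0 i)]
    have h4 : |T * K k x| = T * K k x := abs_of_nonneg (mul_nonneg hTnn (hKnn k x))
    have h5 : |R x| = R x := abs_of_nonneg hRx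
    linarith
  -- final computation
  have hBinteg : ∫ x, B x = (∑ i ∈ Finset.range (k+1), w i * ∫ x, |Q i x - K i x|) + T + T := by
    have i1 : Integrable (fun x : Fin d → ℝ => ∑ i ∈ Finset.range (k+1), w i * |Q i x - K i x|) :=
      integrable_finset_sum _ (fun i _ => (hQKint i).const_mul (w i))
    have i2 : Integrable (fun x : Fin d → ℝ => T * K k x) := (hKint k).const_mul T
    have i12 : Integrable (fun x : Fin d → ℝ =>
        (∑ i ∈ Finset.range (k+1), w i * |Q i x - K i x|) + T * K k x) := i1.add i2
    rw [hB]
    simp only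
    rw [integral_add i12 hRint, integral_add i1 i2,
      integral_finset_sum _ (fun i _ => (hQKint i).const_mul (w i)), hRinteg,
      integral_const_mul, hKinteg k]
    simp_rw [integral_const_mul]
    ring
  have hfin : ∫ x, |p x - hfun x| ≤ C + 2 * W k := by
    have hlhsint : Integrable (fun x : Fin d → ℝ => |p x - hfun x|) := (hpint.sub hfunint).abs
    calc ∫ x, |p x - hfun x| ≤ ∫ x, B x := integral_mono_ae hlhsint hBint habs
      _ = (∑ i ∈ Finset.range (k+1), w i * ∫ x, |Q i x - K i x|) + T + T := hBinteg
      _ ≤ C + T + T := by linarith [hsum_wC]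
      _ ≤ C + 2 * W k := by linarith [hTW]
  exact ⟨hfun, hlow, hfin⟩
end
end
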